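/- Let Δ be a positive self-adjoint operator on l²(π)^d, and let (Δᵢ)ᵢ be a net of positive self-adjoint operators (over groups πᵢ with normalized traces trᵢ) such that: (a) there is K with ‖Δᵢ‖ ≤ K for all i and ‖Δ‖ ≤ K, and (b) for every polynomial p, tr_π(p(Δ)) = limᵢ trᵢ(p(Δᵢ)). Define F̄(λ) := limsupᵢ F_{Δᵢ}(λ) and F̲(λ) := liminfᵢ F_{Δᵢ}(λ). Then F̄(λ) ≤ F_Δ(λ) ≤ F̲⁺(λ) for all λ, and F_Δ(λ) = F̲⁺(λ) = F̄⁺(λ), where G⁺(λ) := lim_{ε→0⁺} G(λ+ε). -/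

import Mathlib

open MeasureTheory Filter Set

/-- The spectral density function of (the spectral measure of) `Δ`:
`F_Δ(lam) = μ([0, lam])`. -/
noncomputable def sdf (μ : Measure ℝ) (lam : ℝ) : ℝ := (μ (Icc 0 lam)).toReal

/-- The right-continuous regularization `G⁺(lam) = lim_{ε→0⁺} G(lam+ε)` of a monotone
function `G`. -/
noncomputable def rcReg (G : ℝ → ℝ) (lam : ℝ) : ℝ := sInf (G '' Ioi lam)


/-- Piecewise linear hat: 1 on `(-∞,a]`, 0 on `[b,∞)`. -/
noncomputable def hatFn (a b x : ℝ) : ℝ := max 0 (min 1 ((b - x) / (b - a)))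

lemma hatFn_continuous (a b : ℝ) : Continuous (hatFn a b) := by
  unfold hatFn
  fun_prop

lemma hatFn_nonneg (a b x : ℝ) : 0 ≤ hatFn a b x := le_max_left _ _

lemma hatFn_le_one (a b x : ℝ) : hatFn a b x ≤ 1 :=
  max_le zero_le_one (min_le_left _ _)

lemma hatFn_of_le {a b x : ℝ} (hab : a < b) (hx : x ≤ a) : hatFn a b x = 1 := by
  have h1 : (1 : ℝ) ≤ (b - x) / (b - a) := by
    rw [le_div_iff₀ (by linarith)]
    linarith
  unfold hatFn
  rw [min_eq_left h1, max_eq_right zero_le_one]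

lemma hatFn_of_ge {a b x : ℝ} (hab : a < b) (hx : b ≤ x) : hatFn a b x = 0 := by
  have h1 : (b - x) / (b - a) ≤ 0 :=
    div_nonpos_of_nonpos_of_nonneg (by linarith) (by linarith)
  unfold hatFn
  rw [max_eq_left ((min_le_right _ _).trans h1)]

lemma hatFn_integrable (a b : ℝ) (ν : Measure ℝ) [IsFiniteMeasure ν] :
    Integrable (hatFn a b) ν := by
  refine (integrable_const (1 : ℝ)).mono'
    (hatFn_continuous a b).aestronglyMeasurable (ae_of_all _ fun x => ?_)
  rw [Real.norm_eq_abs, abs_of_nonneg (hatFn_nonneg a b x)]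
  exact hatFn_le_one a b x

lemma sdf_le_hat {a b : ℝ} (hab : a < b) (ν : Measure ℝ) [IsFiniteMeasure ν] :
    (ν (Icc 0 a)).toReal ≤ ∫ x, hatFn a b x ∂ν := by
  rw [← measureReal_def, ← integral_indicator_one measurableSet_Icc]
  refine integral_mono ((integrable_const (1 : ℝ)).indicator measurableSet_Icc)
    (hatFn_integrable a b ν) fun x => ?_
  by_cases hx : x ∈ Icc 0 a
  · rw [indicator_of_mem hx, hatFn_of_le hab hx.2]
    rfl
  · rw [indicator_of_notMem hx]
    exact hatFn_nonneg a b x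

lemma hat_le_sdf {a b K : ℝ} (hab : a < b) (ν : Measure ℝ) [IsFiniteMeasure ν]
    (hK : ν (Icc 0 K)ᶜ = 0) :
    ∫ x, hatFn a b x ∂ν ≤ (ν (Icc 0 b)).toReal := by
  rw [← measureReal_def, ← integral_indicator_one measurableSet_Icc]
  have hae : ∀ᵐ x ∂ν, x ∈ Icc 0 K := by
    rw [ae_iff]
    exact hK
  refine integral_mono_ae (hatFn_integrable a b ν)
    ((integrable_const (1 : ℝ)).indicator measurableSet_Icc) ?_
  filter_upwards [hae] with x hx
  rcases le_or_gt x b with h | h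
  · have hxb : x ∈ Icc 0 b := ⟨hx.1, h⟩
    rw [indicator_of_mem hxb]
    exact hatFn_le_one a b x
  · rw [indicator_of_notMem (fun hm => absurd hm.2 (not_le.2 h)), hatFn_of_ge hab h.le]

lemma tendsto_integral_of_moments {ι : Type*} [Preorder ι] [Nonempty ι] [IsDirected ι (· ≤ ·)]
    (d : ℕ) (K : ℝ)
    (μ : Measure ℝ) (μi : ι → Measure ℝ)
    [IsFiniteMeasure μ] [∀ i, IsFiniteMeasure (μi i)]
    (hs : μ (Icc 0 K)ᶜ = 0) (hsi : ∀ i, (μi i) (Icc 0 K)ᶜ = 0)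
    (hd : (μ Set.univ).toReal = d) (hdi : ∀ i, ((μi i) Set.univ).toReal = d)
    (hmom : ∀ p : Polynomial ℝ,
      Tendsto (fun i => ∫ x, p.eval x ∂(μi i)) atTop (nhds (∫ x, p.eval x ∂μ)))
    (f : ℝ → ℝ) (hf : Continuous f) (hf0 : ∀ x, 0 ≤ f x) (hf1 : ∀ x, f x ≤ 1) :
    Tendsto (fun i => ∫ x, f x ∂(μi i)) atTop (nhds (∫ x, f x ∂μ)) := by
  set K' : ℝ := max K 0 with hK'
  rw [Metric.tendsto_nhds]
  intro ε hε
  have hd1 : (0 : ℝ) < 3 * ((d : ℝ) + 1) := by positivity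
  set ε' : ℝ := ε / (3 * ((d : ℝ) + 1)) with hε'def
  have hε' : 0 < ε' := div_pos hε hd1
  have hε'd : ε' * d ≤ ε / 3 := by
    rw [hε'def, div_mul_eq_mul_div, div_le_div_iff₀ hd1 (by norm_num)]
    nlinarith [hε.le, Nat.cast_nonneg (α := ℝ) d]
  obtain ⟨p, hp⟩ := exists_polynomial_near_of_continuousOn 0 K' f hf.continuousOn ε' hε'
  have key : ∀ (ν : Measure ℝ), ∀ [IsFiniteMeasure ν], ν (Icc 0 K)ᶜ = 0 →
      (ν Set.univ).toReal = d →
      |(∫ x, f x ∂ν) - ∫ x, p.eval x ∂ν| ≤ ε / 3 := by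
    intro ν _ hν hνd
    have hae : ∀ᵐ x ∂ν, x ∈ Icc 0 K' := by
      rw [ae_iff]
      refine measure_mono_null ?_ hν
      intro x hx
      simp only [mem_setOf_eq, mem_compl_iff, mem_Icc, not_and_or, not_le] at hx ⊢
      rcases hx with h | h
      · exact Or.inl h
      · exact Or.inr (lt_of_le_of_lt (le_max_left K 0) h)
    have hres : ν.restrict (Icc 0 K') = ν := Measure.restrict_eq_self_of_ae_mem hae
    have hpint : Integrable (fun x => p.eval x) ν := by
      rw [← hres]
      exact p.continuous.continuousOn.integrableOn_compact isCompact_Icc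
    have hfint : Integrable f ν := by
      refine (integrable_const (1 : ℝ)).mono' hf.aestronglyMeasurable (ae_of_all _ fun x => ?_)
      rw [Real.norm_eq_abs, abs_of_nonneg (hf0 x)]
      exact hf1 x
    rw [← integral_sub hfint hpint]
    have hb : ‖∫ x in Icc 0 K', (f x - p.eval x) ∂ν‖ ≤ ε' * (ν (Icc 0 K')).toReal := by
      refine norm_setIntegral_le_of_norm_le_const (measure_lt_top ν _)
        fun x hx => ?_
      rw [Real.norm_eq_abs, abs_sub_comm]
      exact (hp x hx).le
    rw [hres] at hb
    rw [← Real.norm_eq_abs]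
    refine hb.trans ?_
    calc ε' * (ν (Icc 0 K')).toReal ≤ ε' * (ν Set.univ).toReal := by
          exact mul_le_mul_of_nonneg_left
            (ENNReal.toReal_mono (measure_ne_top ν _) (measure_mono (subset_univ _))) hε'.le
      _ = ε' * d := by rw [hνd]
      _ ≤ ε / 3 := hε'd
  have hmomp := (Metric.tendsto_nhds.1 (hmom p)) (ε / 3) (by linarith)
  filter_upwards [hmomp] with i hi
  rw [Real.dist_eq]
  rw [Real.dist_eq] at hi
  have h1 := key (μi i) (hsi i) (hdi i)
  have h2 := key μ hs hd
  calc |(∫ x, f x ∂μi i) - ∫ x, f x ∂μ|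
      ≤ |(∫ x, f x ∂μi i) - ∫ x, p.eval x ∂μi i| +
        |(∫ x, p.eval x ∂μi i) - ∫ x, p.eval x ∂μ| +
        |(∫ x, p.eval x ∂μ) - ∫ x, f x ∂μ| := by
        have := abs_sub_le (∫ x, f x ∂μi i) (∫ x, p.eval x ∂μi i) (∫ x, f x ∂μ)
        have := abs_sub_le (∫ x, p.eval x ∂μi i) (∫ x, p.eval x ∂μ) (∫ x, f x ∂μ)
        linarith
    _ < ε := by
        rw [abs_sub_comm] at h2
        linarith

lemma sdf_tendsto_right (ν : Measure ℝ) [IsFiniteMeasure ν] (lam : ℝ) :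
    Tendsto (fun n : ℕ => sdf ν (lam + 1 / (n + 1))) atTop (nhds (sdf ν lam)) := by
  have hmono : Antitone fun n : ℕ => Icc (0 : ℝ) (lam + 1 / (n + 1)) := by
    intro m n hmn
    refine Icc_subset_Icc le_rfl ?_
    have h1 : (0 : ℝ) < m + 1 := by positivity
    have h2 : (m : ℝ) + 1 ≤ n + 1 := by exact_mod_cast Nat.succ_le_succ hmn
    have := one_div_le_one_div_of_le h1 h2
    linarith
  have hint : (⋂ n : ℕ, Icc (0 : ℝ) (lam + 1 / (n + 1))) = Icc 0 lam := by
    ext x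
    simp only [mem_iInter, mem_Icc]
    constructor
    · intro h
      refine ⟨(h 0).1, ?_⟩
      by_contra hlt
      push_neg at hlt
      obtain ⟨n, hn⟩ := exists_nat_one_div_lt (show (0 : ℝ) < x - lam by linarith)
      have := (h n).2
      linarith
    · rintro ⟨h0, h1⟩ n
      have : (0 : ℝ) < 1 / ((n : ℝ) + 1) := by positivity
      exact ⟨h0, by linarith⟩
  have hm := tendsto_measure_iInter_atTop
    (μ := ν) (s := fun n : ℕ => Icc (0 : ℝ) (lam + 1 / (n + 1)))
    (fun n => measurableSet_Icc.nullMeasurableSet) hmono ⟨0, measure_ne_top ν _⟩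
  rw [hint] at hm
  have := (ENNReal.tendsto_toReal (measure_ne_top ν (Icc 0 lam))).comp hm
  simpa [sdf, Function.comp_def] using this

lemma stmt_11_aux {ι : Type*} [Preorder ι] [Nonempty ι] [IsDirected ι (· ≤ ·)]
    (d : ℕ) (K : ℝ)
    (μ : Measure ℝ) (μi : ι → Measure ℝ)
    [IsFiniteMeasure μ] [∀ i, IsFiniteMeasure (μi i)]
    (hs : μ (Icc 0 K)ᶜ = 0) (hsi : ∀ i, (μi i) (Icc 0 K)ᶜ = 0)
    (hd : (μ Set.univ).toReal = d) (hdi : ∀ i, ((μi i) Set.univ).toReal = d)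
    (hmom : ∀ p : Polynomial ℝ,
      Tendsto (fun i => ∫ x, p.eval x ∂(μi i)) atTop (nhds (∫ x, p.eval x ∂μ))) :
    ∀ lam : ℝ,
      limsup (fun i => sdf (μi i) lam) atTop ≤ sdf μ lam ∧
      sdf μ lam ≤ sInf ((fun t => liminf (fun i => sdf (μi i) t) atTop) '' Ioi lam) ∧
      sdf μ lam = sInf ((fun t => liminf (fun i => sdf (μi i) t) atTop) '' Ioi lam) ∧
      sdf μ lam = sInf ((fun t => limsup (fun i => sdf (μi i) t) atTop) '' Ioi lam) := by
  intro lam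
  have hFi_nonneg : ∀ i t, 0 ≤ sdf (μi i) t := fun i t => ENNReal.toReal_nonneg
  have hFi_le : ∀ i t, sdf (μi i) t ≤ d := fun i t => by
    rw [← hdi i]
    exact ENNReal.toReal_mono (measure_ne_top _ _) (measure_mono (subset_univ _))
  have hbdd : ∀ t, IsBoundedUnder (· ≤ ·) atTop fun i => sdf (μi i) t :=
    fun t => isBoundedUnder_of ⟨d, fun i => hFi_le i t⟩
  have hbddge : ∀ t, IsBoundedUnder (· ≥ ·) atTop fun i => sdf (μi i) t :=
    fun t => isBoundedUnder_of ⟨0, fun i => hFi_nonneg i t⟩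
  -- Part 1 : pointwise limsup bound
  have part1 : ∀ t, limsup (fun i => sdf (μi i) t) atTop ≤ sdf μ t := by
    intro t
    have key : ∀ b, t < b → limsup (fun i => sdf (μi i) t) atTop ≤ (μ (Icc 0 b)).toReal := by
      intro b hb
      have h1 : ∀ i, sdf (μi i) t ≤ ∫ x, hatFn t b x ∂(μi i) := fun i => sdf_le_hat hb (μi i)
      have h2 : Tendsto (fun i => ∫ x, hatFn t b x ∂(μi i)) atTop
          (nhds (∫ x, hatFn t b x ∂μ)) :=
        tendsto_integral_of_moments d K μ μi hs hsi hd hdi hmom _ (hatFn_continuous t b)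
          (hatFn_nonneg t b) (hatFn_le_one t b)
      have hb2 : IsBoundedUnder (· ≤ ·) atTop fun i => ∫ x, hatFn t b x ∂(μi i) :=
        isBoundedUnder_of ⟨d, fun i => (hat_le_sdf hb (μi i) (hsi i)).trans (hFi_le i b)⟩
      have h3 := limsup_le_limsup (Eventually.of_forall h1)
        ((hbddge t).isCoboundedUnder_le) hb2
      rw [h2.limsup_eq] at h3
      exact h3.trans (hat_le_sdf hb μ hs)
    refine ge_of_tendsto (sdf_tendsto_right μ t) (Eventually.of_forall fun n => ?_)
    exact key (t + 1 / (n + 1)) (lt_add_of_pos_right _ (by positivity))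
  -- Part 2 : liminf lower bound at points to the right
  have part2 : ∀ t, lam < t → sdf μ lam ≤ liminf (fun i => sdf (μi i) t) atTop := by
    intro t ht
    have h1 : ∀ i, ∫ x, hatFn lam t x ∂(μi i) ≤ sdf (μi i) t :=
      fun i => hat_le_sdf ht (μi i) (hsi i)
    have h2 : Tendsto (fun i => ∫ x, hatFn lam t x ∂(μi i)) atTop
        (nhds (∫ x, hatFn lam t x ∂μ)) :=
      tendsto_integral_of_moments d K μ μi hs hsi hd hdi hmom _ (hatFn_continuous lam t)
        (hatFn_nonneg lam t) (hatFn_le_one lam t)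
    have hb2 : IsBoundedUnder (· ≤ ·) atTop fun i => ∫ x, hatFn lam t x ∂(μi i) :=
      isBoundedUnder_of ⟨d, fun i => (h1 i).trans (hFi_le i t)⟩
    calc sdf μ lam ≤ ∫ x, hatFn lam t x ∂μ := sdf_le_hat ht μ
      _ = liminf (fun i => ∫ x, hatFn lam t x ∂(μi i)) atTop := h2.liminf_eq.symm
      _ ≤ liminf (fun i => sdf (μi i) t) atTop :=
          liminf_le_liminf (Eventually.of_forall h1)
            (isBoundedUnder_of ⟨0, fun i => integral_nonneg (hatFn_nonneg lam t)⟩)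
            (hbdd t).isCoboundedUnder_ge
  have hne : ((fun t => liminf (fun i => sdf (μi i) t) atTop) '' Ioi lam).Nonempty :=
    ⟨_, mem_image_of_mem _ (mem_Ioi.2 (lt_add_one lam))⟩
  have hne2 : ((fun t => limsup (fun i => sdf (μi i) t) atTop) '' Ioi lam).Nonempty :=
    ⟨_, mem_image_of_mem _ (mem_Ioi.2 (lt_add_one lam))⟩
  have hliminf0 : ∀ t, 0 ≤ liminf (fun i => sdf (μi i) t) atTop := fun t =>
    le_liminf_of_le (hbdd t).isCoboundedUnder_ge
      (Eventually.of_forall fun i => hFi_nonneg i t)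
  have bdd1 : BddBelow ((fun t => liminf (fun i => sdf (μi i) t) atTop) '' Ioi lam) := by
    refine ⟨0, ?_⟩
    rintro x ⟨t, _, rfl⟩
    exact hliminf0 t
  have bdd2 : BddBelow ((fun t => limsup (fun i => sdf (μi i) t) atTop) '' Ioi lam) := by
    refine ⟨0, ?_⟩
    rintro x ⟨t, _, rfl⟩
    exact (hliminf0 t).trans (liminf_le_limsup (hbdd t) (hbddge t))
  have h2' : sdf μ lam ≤ sInf ((fun t => liminf (fun i => sdf (μi i) t) atTop) '' Ioi lam) := by
    refine le_csInf hne ?_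
    rintro x ⟨t, ht, rfl⟩
    exact part2 t ht
  have h3' : sInf ((fun t => limsup (fun i => sdf (μi i) t) atTop) '' Ioi lam) ≤ sdf μ lam := by
    refine ge_of_tendsto (sdf_tendsto_right μ lam) (Eventually.of_forall fun n => ?_)
    calc sInf ((fun t => limsup (fun i => sdf (μi i) t) atTop) '' Ioi lam)
        ≤ limsup (fun i => sdf (μi i) (lam + 1 / (n + 1))) atTop :=
          csInf_le bdd2 ⟨_, mem_Ioi.2 (lt_add_of_pos_right _ (by positivity)), rfl⟩
      _ ≤ sdf μ (lam + 1 / (n + 1)) := part1 _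
  have h12 : sInf ((fun t => liminf (fun i => sdf (μi i) t) atTop) '' Ioi lam) ≤
      sInf ((fun t => limsup (fun i => sdf (μi i) t) atTop) '' Ioi lam) := by
    refine le_csInf hne2 ?_
    rintro x ⟨t, ht, rfl⟩
    exact (csInf_le bdd1 ⟨t, ht, rfl⟩).trans (liminf_le_limsup (hbdd t) (hbddge t))
  exact ⟨part1 lam, h2', le_antisymm h2' (h12.trans h3'), le_antisymm (h2'.trans h12) h3'⟩

/-- Approximation of spectral density functions.  `Δ` (with spectral measure `μ` w.r.t.
`tr_π`) and the net `Δᵢ` (with spectral measures `μᵢ` w.r.t. the normalized traces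
`trᵢ`) satisfy: (a) a uniform norm bound `K` (all spectral measures live on `[0, K]`,
with total mass `d`), and (b) `tr_π(p(Δ)) = limᵢ trᵢ(p(Δᵢ))` for every polynomial `p`.
Then with `F̄(lam) := limsupᵢ F_{Δᵢ}(lam)` and `F̲(lam) := liminfᵢ F_{Δᵢ}(lam)` we have
`F̄(lam) ≤ F_Δ(lam) ≤ F̲⁺(lam)` and `F_Δ(lam) = F̲⁺(lam) = F̄⁺(lam)` for all `lam`. -/
theorem stmt_11 {ι : Type*} [Preorder ι] [Nonempty ι] [IsDirected ι (· ≤ ·)]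
    (d : ℕ) (K : ℝ)
    (μ : Measure ℝ) (μi : ι → Measure ℝ)
    [IsFiniteMeasure μ] [∀ i, IsFiniteMeasure (μi i)]
    (hs : μ (Icc 0 K)ᶜ = 0) (hsi : ∀ i, (μi i) (Icc 0 K)ᶜ = 0)
    (hd : (μ Set.univ).toReal = d) (hdi : ∀ i, ((μi i) Set.univ).toReal = d)
    (hmom : ∀ p : Polynomial ℝ,
      Tendsto (fun i => ∫ x, p.eval x ∂(μi i)) atTop (nhds (∫ x, p.eval x ∂μ))) :
    ∀ lam : ℝ,
      limsup (fun i => sdf (μi i) lam) atTop ≤ sdf μ lam ∧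
      sdf μ lam ≤ rcReg (fun t => liminf (fun i => sdf (μi i) t) atTop) lam ∧
      sdf μ lam = rcReg (fun t => liminf (fun i => sdf (μi i) t) atTop) lam ∧
      sdf μ lam = rcReg (fun t => limsup (fun i => sdf (μi i) t) atTop) lam :=
  stmt_11_aux d K μ μi hs hsi hd hdi hmom
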